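/- If σ is a strategy for Nature over M_V and U ⊆ V, then the restriction σ|_U := σ ∩ Hist(M_U) is a strategy for Nature over M_U. -/
import Mathlib


/-- A causal measurement scenario: a type of measurements `X`, outcome sets
`O x`, and an enabling relation from sets of events to measurements. -/
structure CMS (X Ω : Type*) where
  O : X → Set Ω
  enab : Set (X × Ω) → X → Prop

namespace CMS

variable {X Ω : Type*}

/-- A set of events is consistent if it is the graph of a partial function. -/
def consistent (s : Set (X × Ω)) : Prop :=
  ∀ x o o', (x, o) ∈ s → (x, o') ∈ s → o = o'

/-- The domain of a set of events: the measurements performed. -/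
def domain (s : Set (X × Ω)) : Set X := {x | ∃ o, (x, o) ∈ s}

/-- Accessibility: `x` may be performed after the events in `s`. -/
def acc (M : CMS X Ω) (s : Set (X × Ω)) (x : X) : Prop :=
  x ∉ domain s ∧ ∃ t ⊆ s, M.enab t x

/-- Histories: the least family containing `∅` and closed under adjoining
an event `(x, o)` for accessible `x` and `o ∈ O x`. -/
inductive Hist (M : CMS X Ω) : Set (X × Ω) → Prop
  | empty : Hist M ∅
  | step {s : Set (X × Ω)} {x : X} {o : Ω} :
      Hist M s → M.acc s x → o ∈ M.O x → Hist M (s ∪ {(x, o)})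

/-- A strategy for Nature: a (nonempty) downward-closed set of histories,
deterministic and total: unique outcome responses to accessible measurements. -/
structure IsStrategy (M : CMS X Ω) (σ : Set (Set (X × Ω))) : Prop where
  nonempty : σ.Nonempty
  hist : ∀ s ∈ σ, M.Hist s
  dc : ∀ s t : Set (X × Ω), M.Hist s → s ⊆ t → t ∈ σ → s ∈ σ
  resp : ∀ s ∈ σ, ∀ x : X, M.acc s x →
    ∃! o : Ω, o ∈ M.O x ∧ s ∪ {(x, o)} ∈ σ

/-- The restriction `M_U` of a scenario to a subset `U` of measurements. -/
def restrict (M : CMS X Ω) (U : Set X) : CMS X Ω where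
  O := M.O
  enab := fun s x => M.enab s x ∧ domain s ∪ {x} ⊆ U

end CMS

open CMS


lemma acc_mono {X Ω : Type*} (M : CMS X Ω) {U V : Set X} (hUV : U ⊆ V)
    {s : Set (X × Ω)} {x : X} (h : (M.restrict U).acc s x) : (M.restrict V).acc s x := by
  obtain ⟨hx, t, hts, he, hsub⟩ := h
  exact ⟨hx, t, hts, he, hsub.trans hUV⟩

lemma hist_mono {X Ω : Type*} (M : CMS X Ω) {U V : Set X} (hUV : U ⊆ V)
    {s : Set (X × Ω)} (h : (M.restrict U).Hist s) : (M.restrict V).Hist s := by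
  induction h with
  | empty => exact CMS.Hist.empty
  | step hs ha ho ih => exact CMS.Hist.step ih (acc_mono M hUV ha) ho

/-- The restriction of a strategy over `M_V` to `U ⊆ V` is a strategy over `M_U`. -/
theorem restrict_strategy {X Ω : Type*} (M : CMS X Ω) (U V : Set X) (hUV : U ⊆ V)
    (σ : Set (Set (X × Ω))) (hσ : (M.restrict V).IsStrategy σ) :
    (M.restrict U).IsStrategy (σ ∩ {s | (M.restrict U).Hist s}) := by
  constructor
  · obtain ⟨t, ht⟩ := hσ.nonempty
    exact ⟨∅, hσ.dc ∅ t CMS.Hist.empty (Set.empty_subset t) ht, CMS.Hist.empty⟩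
  · exact fun s hs => hs.2
  · intro s t hs hst ht
    exact ⟨hσ.dc s t (hist_mono M hUV hs) hst ht.1, hs⟩
  · intro s hs x hx
    obtain ⟨o, ⟨ho, hoσ⟩, huniq⟩ := hσ.resp s hs.1 x (acc_mono M hUV hx)
    refine ⟨o, ⟨ho, hoσ, CMS.Hist.step hs.2 hx ho⟩, ?_⟩
    intro o' ⟨ho', hσ', _⟩
    exact huniq o' ⟨ho', hσ'⟩
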